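/- Every unit disk graph admits a conflict-free 6-coloring. That is, if V is a finite set and p : V → ℝ², then the simple graph on V in which distinct u, v are adjacent if and only if the Euclidean distance between p(u) and p(v) is at most 2 admits a conflict-free 6-coloring. -/

import Mathlib

/-- A conflict-free coloring of `G` with `k` colors: a partial coloring
(uncolored vertices get `none`) such that every vertex has, in its closed
neighborhood, a colored vertex whose color occurs exactly once there. -/
def IsCFColoring {V : Type*} (G : SimpleGraph V) {k : ℕ} (χ : V → Option (Fin k)) : Prop :=
  ∀ v : V, ∃ u ∈ insert v (G.neighborSet v), (χ u).isSome ∧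
    ∀ w ∈ insert v (G.neighborSet v), χ w = χ u → w = u

/-- `G` admits a conflict-free coloring with `k` colors. -/
def HasCFColoring {V : Type*} (G : SimpleGraph V) (k : ℕ) : Prop :=
  ∃ χ : V → Option (Fin k), IsCFColoring G χ

/-- The unit disk graph on points `p`: distinct vertices are adjacent iff the
Euclidean distance of their points is at most 2 (the unit disks intersect). -/
def unitDiskGraph {V : Type*} (p : V → EuclideanSpace ℝ (Fin 2)) : SimpleGraph V where
  Adj u v := u ≠ v ∧ dist (p u) (p v) ≤ 2
  symm := by
    constructor
    intro u v ⟨h1, h2⟩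
    exact ⟨h1.symm, by rwa [dist_comm]⟩
  loopless := by
    constructor
    intro v ⟨h1, _⟩
    exact h1 rfl

set_option maxHeartbeats 1000000

noncomputable section CFProofSection
namespace CFAux

attribute [local instance] Classical.propDecidable

variable {V : Type*}

/-! ### Generic square/abs helpers -/

lemma dist_sq_eq (a b : EuclideanSpace ℝ (Fin 2)) :
    dist a b ^ 2 = (a 0 - b 0)^2 + (a 1 - b 1)^2 := by
  rw [EuclideanSpace.dist_eq, Real.sq_sqrt (by positivity)]
  simp [Fin.sum_univ_two, Real.dist_eq, sq_abs]

lemma abs_le_of_sq_le (x d : ℝ) (hd : 0 ≤ d) (h : x^2 ≤ d^2) : |x| ≤ d := by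
  have := Real.sqrt_le_sqrt h
  rwa [Real.sqrt_sq_eq_abs, Real.sqrt_sq hd] at this

lemma abs_dx_le (a b : EuclideanSpace ℝ (Fin 2)) : |a 0 - b 0| ≤ dist a b := by
  apply abs_le_of_sq_le _ _ dist_nonneg
  have := dist_sq_eq a b
  nlinarith [sq_nonneg (a 1 - b 1)]

lemma abs_dy_le (a b : EuclideanSpace ℝ (Fin 2)) : |a 1 - b 1| ≤ dist a b := by
  apply abs_le_of_sq_le _ _ dist_nonneg
  have := dist_sq_eq a b
  nlinarith [sq_nonneg (a 0 - b 0)]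

lemma dist_le_two_of_sq (a b : EuclideanSpace ℝ (Fin 2))
    (h : (a 0 - b 0)^2 + (a 1 - b 1)^2 ≤ 4) : dist a b ≤ 2 := by
  have h2 : |dist a b| ≤ 2 := by
    apply abs_le_of_sq_le _ _ (by norm_num)
    rw [dist_sq_eq]; nlinarith
  rwa [abs_of_nonneg dist_nonneg] at h2

lemma sq_gt_of_dist_gt (a b : EuclideanSpace ℝ (Fin 2)) (h : 2 < dist a b) :
    4 < (a 0 - b 0)^2 + (a 1 - b 1)^2 := by
  have := dist_sq_eq a b
  nlinarith [dist_nonneg (x := a) (y := b)]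

/-! ### The strip index -/

/-- Strip index: which horizontal strip of height 6/5 a vertex lies in. -/
def strip (p : V → EuclideanSpace ℝ (Fin 2)) (v : V) : ℤ := ⌊p v 1 / (6/5 : ℝ)⌋

lemma strip_lb (p : V → EuclideanSpace ℝ (Fin 2)) (v : V) :
    (strip p v : ℝ) * (6/5) ≤ p v 1 := by
  have := Int.floor_le (p v 1 / (6/5 : ℝ))
  have h5 : (0:ℝ) < 6/5 := by norm_num
  calc (strip p v : ℝ) * (6/5) ≤ (p v 1 / (6/5)) * (6/5) := by
        apply mul_le_mul_of_nonneg_right this (by norm_num)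
    _ = p v 1 := by field_simp

lemma strip_ub (p : V → EuclideanSpace ℝ (Fin 2)) (v : V) :
    p v 1 < ((strip p v : ℝ) + 1) * (6/5) := by
  have := Int.lt_floor_add_one (p v 1 / (6/5 : ℝ))
  have h5 : (0:ℝ) < 6/5 := by norm_num
  calc p v 1 = (p v 1 / (6/5)) * (6/5) := by field_simp
    _ < ((strip p v : ℝ) + 1) * (6/5) := by
        apply mul_lt_mul_of_pos_right _ h5
        exact_mod_cast this

lemma same_strip_dy (p : V → EuclideanSpace ℝ (Fin 2)) {u w : V}
    (h : strip p u = strip p w) : |p u 1 - p w 1| < 6/5 := by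
  have h1 := strip_lb p u
  have h2 := strip_ub p u
  have h3 := strip_lb p w
  have h4 := strip_ub p w
  rw [h] at h1 h2
  rw [abs_lt]; constructor <;> linarith

/-- If two vertices are within distance 2, their strips differ by at most 2. -/
lemma strip_close (p : V → EuclideanSpace ℝ (Fin 2)) {u w : V}
    (h : dist (p u) (p w) ≤ 2) : strip p u ≤ strip p w + 2 ∧ strip p w ≤ strip p u + 2 := by
  have hy : |p u 1 - p w 1| ≤ 2 := (abs_dy_le (p u) (p w)).trans h
  have h1 := strip_lb p u
  have h2 := strip_ub p u
  have h3 := strip_lb p w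
  have h4 := strip_ub p w
  rw [abs_le] at hy
  constructor
  · by_contra hc
    push_neg at hc
    have h3' : strip p w + 3 ≤ strip p u := by omega
    have : (strip p w : ℝ) + 3 ≤ (strip p u : ℝ) := by exact_mod_cast h3'
    linarith
  · by_contra hc
    push_neg at hc
    have h3' : strip p u + 3 ≤ strip p w := by omega
    have : (strip p u : ℝ) + 3 ≤ (strip p w : ℝ) := by exact_mod_cast h3'
    linarith

/-! ### Greedy selection -/

/-- Greedy selection: scan the list, keep an element iff it is at distance > 2
from all previously kept elements (`acc` is the set of previously kept ones). -/
def go (p : V → EuclideanSpace ℝ (Fin 2)) : List V → List V → List V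
  | _, [] => []
  | acc, v :: rest =>
    if ∀ r ∈ acc, 2 < dist (p r) (p v) then v :: go p (v :: acc) rest
    else go p acc rest

lemma go_sublist (p : V → EuclideanSpace ℝ (Fin 2)) :
    ∀ (l acc : List V), List.Sublist (go p acc l) l := by
  intro l
  induction l with
  | nil => intro acc; simp [go]
  | cons v rest ih =>
    intro acc
    rw [go]
    split
    · exact (ih (v :: acc)).cons₂ v
    · exact (ih acc).cons v

lemma go_sep (p : V → EuclideanSpace ℝ (Fin 2)) :
    ∀ (l acc : List V), ∀ s ∈ go p acc l, ∀ r ∈ acc, 2 < dist (p r) (p s) := by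
  intro l
  induction l with
  | nil => intro acc s hs; simp [go] at hs
  | cons v rest ih =>
    intro acc s hs r hr
    rw [go] at hs
    split at hs
    · rcases List.mem_cons.mp hs with h | h
      · subst h; exact ‹∀ r ∈ acc, 2 < dist (p r) (p s)› r hr
      · exact ih (v :: acc) s h r (List.mem_cons_of_mem v hr)
    · exact ih acc s hs r hr

lemma go_pairwise (p : V → EuclideanSpace ℝ (Fin 2)) :
    ∀ (l acc : List V), (go p acc l).Pairwise (fun a b => 2 < dist (p a) (p b)) := by
  intro l
  induction l with
  | nil => intro acc; simp [go]
  | cons v rest ih =>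
    intro acc
    rw [go]
    split
    · refine List.Pairwise.cons ?_ (ih (v :: acc))
      intro s hs
      exact go_sep p rest (v :: acc) s hs v List.mem_cons_self
    · exact ih acc

lemma go_dom (p : V → EuclideanSpace ℝ (Fin 2)) :
    ∀ (l acc : List V), ∀ v ∈ l,
      ∃ r, (r ∈ acc ∨ r ∈ go p acc l) ∧ dist (p r) (p v) ≤ 2 := by
  intro l
  induction l with
  | nil => intro acc v hv; simp at hv
  | cons w rest ih =>
    intro acc v hv
    rw [go]
    rcases List.mem_cons.mp hv with h | h
    · subst h
      split
      · exact ⟨v, Or.inr List.mem_cons_self, by simp⟩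
      · rename_i hcond
        push_neg at hcond
        obtain ⟨r, hr, hrd⟩ := hcond
        exact ⟨r, Or.inl hr, hrd⟩
    · split
      · obtain ⟨r, hr, hrd⟩ := ih (w :: acc) v h
        rcases hr with hr | hr
        · rcases List.mem_cons.mp hr with h' | h'
          · subst h'; exact ⟨r, Or.inr List.mem_cons_self, hrd⟩
          · exact ⟨r, Or.inl h', hrd⟩
        · exact ⟨r, Or.inr (List.mem_cons_of_mem _ hr), hrd⟩
      · exact ih acc v h

/-! ### Sorted strip lists and representatives -/

variable [Fintype V]

/-- A linear-order-like relation: sort by x-coordinate, tie-break by an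
arbitrary equivalence with `Fin (card V)`. -/
def ord (p : V → EuclideanSpace ℝ (Fin 2)) (u w : V) : Prop :=
  p u 0 < p w 0 ∨ (p u 0 = p w 0 ∧ Fintype.equivFin V u ≤ Fintype.equivFin V w)

lemma ord_x_le {p : V → EuclideanSpace ℝ (Fin 2)} {u w : V} (h : ord p u w) :
    p u 0 ≤ p w 0 := by
  rcases h with h | ⟨h, _⟩
  · exact h.le
  · exact h.le

lemma ord_trans (p : V → EuclideanSpace ℝ (Fin 2)) :
    ∀ a b c : V, ord p a b → ord p b c → ord p a c := by
  intro a b c hab hbc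
  rcases hab with h | ⟨h, h'⟩ <;> rcases hbc with g | ⟨g, g'⟩
  · exact Or.inl (h.trans g)
  · exact Or.inl (g ▸ h)
  · exact Or.inl (h ▸ g)
  · exact Or.inr ⟨h.trans g, h'.trans g'⟩

lemma ord_antisymm (p : V → EuclideanSpace ℝ (Fin 2)) :
    ∀ a b : V, ord p a b → ord p b a → a = b := by
  intro a b hab hba
  rcases hab with h | ⟨h, h'⟩ <;> rcases hba with g | ⟨g, g'⟩
  · exact absurd (h.trans g) (lt_irrefl _)
  · exact absurd h (g ▸ lt_irrefl _)
  · exact absurd g (h ▸ lt_irrefl _)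
  · exact (Fintype.equivFin V).injective (le_antisymm h' g')

lemma ord_total (p : V → EuclideanSpace ℝ (Fin 2)) :
    ∀ a b : V, ord p a b ∨ ord p b a := by
  intro a b
  rcases lt_trichotomy (p a 0) (p b 0) with h | h | h
  · exact Or.inl (Or.inl h)
  · rcases le_total (Fintype.equivFin V a) (Fintype.equivFin V b) with g | g
    · exact Or.inl (Or.inr ⟨h, g⟩)
    · exact Or.inr (Or.inr ⟨h.symm, g⟩)
  · exact Or.inr (Or.inl h)

local instance ordIsTrans (p : V → EuclideanSpace ℝ (Fin 2)) : IsTrans V (ord p) :=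
  ⟨ord_trans p⟩
local instance ordIsAntisymm (p : V → EuclideanSpace ℝ (Fin 2)) : Std.Antisymm (ord p) :=
  ⟨ord_antisymm p⟩
local instance ordIsTotal (p : V → EuclideanSpace ℝ (Fin 2)) : Std.Total (ord p) :=
  ⟨ord_total p⟩

/-- The vertices of strip `k`, sorted by `ord`. -/
def LL (p : V → EuclideanSpace ℝ (Fin 2)) (k : ℤ) : List V :=
  Finset.sort (Finset.univ.filter fun v => strip p v = k) (ord p)

lemma LL_sorted (p : V → EuclideanSpace ℝ (Fin 2)) (k : ℤ) :
    (LL p k).Pairwise (ord p) :=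
  Finset.pairwise_sort _ _

lemma LL_nodup (p : V → EuclideanSpace ℝ (Fin 2)) (k : ℤ) : (LL p k).Nodup :=
  Finset.sort_nodup _ _

lemma mem_LL {p : V → EuclideanSpace ℝ (Fin 2)} {k : ℤ} {v : V} :
    v ∈ LL p k ↔ strip p v = k := by
  unfold LL
  rw [Finset.mem_sort, Finset.mem_filter]
  simp

/-- The representatives (colored vertices) of strip `k`. -/
def reps (p : V → EuclideanSpace ℝ (Fin 2)) (k : ℤ) : List V := go p [] (LL p k)

lemma reps_sublist (p : V → EuclideanSpace ℝ (Fin 2)) (k : ℤ) :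
    List.Sublist (reps p k) (LL p k) := go_sublist p _ _

lemma reps_strip {p : V → EuclideanSpace ℝ (Fin 2)} {k : ℤ} {u : V}
    (h : u ∈ reps p k) : strip p u = k :=
  mem_LL.mp ((reps_sublist p k).subset h)

lemma reps_sorted (p : V → EuclideanSpace ℝ (Fin 2)) (k : ℤ) :
    (reps p k).Pairwise (ord p) :=
  (LL_sorted p k).sublist (reps_sublist p k)

lemma reps_nodup (p : V → EuclideanSpace ℝ (Fin 2)) (k : ℤ) : (reps p k).Nodup :=
  (LL_nodup p k).sublist (reps_sublist p k)

lemma reps_pairwise (p : V → EuclideanSpace ℝ (Fin 2)) (k : ℤ) :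
    (reps p k).Pairwise (fun a b => 2 < dist (p a) (p b)) := go_pairwise p _ _

lemma reps_dom {p : V → EuclideanSpace ℝ (Fin 2)} {k : ℤ} {v : V}
    (hv : v ∈ LL p k) : ∃ r ∈ reps p k, dist (p r) (p v) ≤ 2 := by
  obtain ⟨r, hr, hrd⟩ := go_dom p (LL p k) [] v hv
  rcases hr with hr | hr
  · simp at hr
  · exact ⟨r, hr, hrd⟩

/-- One-step x-gap: any two reps of the same strip, in order, have
x-coordinates more than 8/5 apart. -/
lemma reps_gap_one {p : V → EuclideanSpace ℝ (Fin 2)} {k : ℤ}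
    (i j : Fin (reps p k).length) (hij : i < j) :
    p ((reps p k).get i) 0 + 8/5 < p ((reps p k).get j) 0 := by
  have hd : 2 < dist (p ((reps p k).get i)) (p ((reps p k).get j)) :=
    List.pairwise_iff_get.mp (reps_pairwise p k) i j hij
  have hx : p ((reps p k).get i) 0 ≤ p ((reps p k).get j) 0 :=
    ord_x_le (List.pairwise_iff_get.mp (reps_sorted p k) i j hij)
  have hs : strip p ((reps p k).get i) = strip p ((reps p k).get j) := by
    rw [reps_strip ((reps p k).get_mem i), reps_strip ((reps p k).get_mem j)]
  have hy := same_strip_dy p hs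
  have hsq := sq_gt_of_dist_gt _ _ hd
  rw [abs_lt] at hy
  nlinarith [sq_nonneg (p ((reps p k).get i) 0 - p ((reps p k).get j) 0)]

/-- Multi-step x-gap. -/
lemma reps_gap {p : V → EuclideanSpace ℝ (Fin 2)} {k : ℤ} :
    ∀ (t : ℕ) (i j : Fin (reps p k).length), (j : ℕ) = (i : ℕ) + t + 1 →
    p ((reps p k).get i) 0 + (8/5) * (t + 1 : ℕ) ≤ p ((reps p k).get j) 0 := by
  intro t
  induction t with
  | zero =>
    intro i j hj
    have := reps_gap_one i j (by rw [Fin.lt_def]; omega)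
    push_cast
    linarith
  | succ t ih =>
    intro i j hj
    have hjlt : (i : ℕ) + t + 1 < (reps p k).length := by
      have := j.isLt; omega
    have h1 := ih i ⟨(i : ℕ) + t + 1, hjlt⟩ rfl
    have h2 := reps_gap_one ⟨(i : ℕ) + t + 1, hjlt⟩ j (by rw [Fin.lt_def]; simp; omega)
    push_cast at h1 ⊢
    simp only [List.get_eq_getElem] at h1 h2 ⊢
    linarith

/-! ### The coloring -/

lemma pal_lt (k : ℤ) : (k % 3).toNat < 3 := by
  have h1 : 0 ≤ k % 3 := Int.emod_nonneg k (by norm_num)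
  have h2 : k % 3 < 3 := Int.emod_lt_of_pos k (by norm_num)
  omega

/-- The conflict-free coloring: a vertex is colored iff it is a representative
of its strip; the color combines the strip index mod 3 (palette) with the
parity of the position among the strip's representatives. -/
def chi (p : V → EuclideanSpace ℝ (Fin 2)) (v : V) : Option (Fin 6) :=
  if hv : v ∈ reps p (strip p v) then
    some ⟨2 * ((strip p v) % 3).toNat + (reps p (strip p v)).idxOf v % 2, by
      have h1 := pal_lt (strip p v)
      have h2 : (reps p (strip p v)).idxOf v % 2 < 2 := Nat.mod_lt _ (by norm_num)
      omega⟩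
  else none

lemma chi_val {p : V → EuclideanSpace ℝ (Fin 2)} {k : ℤ} {u : V} (hu : u ∈ reps p k) :
    ∃ c : Fin 6, chi p u = some c ∧
      (c : ℕ) = 2 * (k % 3).toNat + (reps p k).idxOf u % 2 := by
  have hs : strip p u = k := reps_strip hu
  subst hs
  exact ⟨_, by rw [chi, dif_pos hu], rfl⟩

lemma chi_spec {p : V → EuclideanSpace ℝ (Fin 2)} {w : V} {c : Fin 6}
    (h : chi p w = some c) :
    w ∈ reps p (strip p w) ∧
      (c : ℕ) = 2 * ((strip p w) % 3).toNat + (reps p (strip p w)).idxOf w % 2 := by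
  rw [chi] at h
  split at h
  · refine ⟨‹_›, ?_⟩
    have := Option.some.inj h
    rw [← this]
  · exact absurd h (by simp)

lemma indexOf_get {p : V → EuclideanSpace ℝ (Fin 2)} {k : ℤ}
    (i : Fin (reps p k).length) :
    (reps p k).idxOf ((reps p k).get i) = (i : ℕ) := by
  have hmem : (reps p k).get i ∈ reps p k := (reps p k).get_mem i
  have hlt : (reps p k).idxOf ((reps p k).get i) < (reps p k).length :=
    List.idxOf_lt_length_iff.mpr hmem
  have hg : (reps p k).get ⟨_, hlt⟩ = (reps p k).get i := List.idxOf_get hlt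
  have := (List.Nodup.get_inj_iff (reps_nodup p k)).mp hg
  exact congrArg Fin.val this

end CFAux
end CFProofSection

theorem stmt8 {V : Type*} [Fintype V] (p : V → EuclideanSpace ℝ (Fin 2)) :
    HasCFColoring (unitDiskGraph p) 6 := by
  classical
  refine ⟨CFAux.chi p, ?_⟩
  intro v
  set k : ℤ := CFAux.strip p v with hk
  set R : List V := CFAux.reps p k with hR
  -- membership in the closed neighborhood is exactly "distance ≤ 2"
  have hnbhd : ∀ w : V, w ∈ insert v ((unitDiskGraph p).neighborSet v) ↔
      dist (p w) (p v) ≤ 2 := by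
    intro w
    constructor
    · intro hw
      rcases Set.mem_insert_iff.mp hw with hw | hw
      · subst hw; simp
      · rw [SimpleGraph.mem_neighborSet] at hw
        rw [dist_comm]
        exact hw.2
    · intro hw
      by_cases he : w = v
      · subst he; exact Set.mem_insert _ _
      · refine Set.mem_insert_of_mem _ ?_
        rw [SimpleGraph.mem_neighborSet]
        exact ⟨Ne.symm he, by rwa [dist_comm]⟩
  -- every vertex has a representative of its own strip within distance 2
  have hvL : v ∈ CFAux.LL p k := CFAux.mem_LL.mpr hk.symm
  obtain ⟨r, hrR, hrd⟩ := CFAux.reps_dom hvL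
  obtain ⟨ir, hir⟩ := List.mem_iff_get.mp hrR
  -- the set of indices of reps within distance 2 of v
  set A : Finset (Fin R.length) :=
    Finset.univ.filter (fun i => dist (p (R.get i)) (p v) ≤ 2) with hA
  have hmemA : ∀ i : Fin R.length, i ∈ A ↔ dist (p (R.get i)) (p v) ≤ 2 := by
    intro i; rw [hA, Finset.mem_filter]; simp
  have hAne : A.Nonempty := ⟨ir, (hmemA ir).mpr (by rw [hir]; exact hrd)⟩
  set i0 : Fin R.length := A.min' hAne with hi0
  set i1 : Fin R.length := A.max' hAne with hi1
  have hd0 : dist (p (R.get i0)) (p v) ≤ 2 := (hmemA i0).mp (A.min'_mem hAne)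
  have hd1 : dist (p (R.get i1)) (p v) ≤ 2 := (hmemA i1).mp (A.max'_mem hAne)
  have hi01 : (i0 : ℕ) ≤ (i1 : ℕ) := A.min'_le i1 (A.max'_mem hAne)
  -- x-coordinate bounds
  have hx0 : |p (R.get i0) 0 - p v 0| ≤ 2 := (CFAux.abs_dx_le _ _).trans hd0
  have hx1 : |p (R.get i1) 0 - p v 0| ≤ 2 := (CFAux.abs_dx_le _ _).trans hd1
  rw [abs_le] at hx0 hx1
  -- the span of A is at most 2
  have hspan : (i1 : ℕ) ≤ (i0 : ℕ) + 2 := by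
    by_contra hcon
    push_neg at hcon
    have hgap := CFAux.reps_gap ((i1 : ℕ) - (i0 : ℕ) - 1) i0 i1 (by omega)
    have h3 : (3 : ℝ) ≤ (((i1 : ℕ) - (i0 : ℕ) - 1 : ℕ) + 1 : ℕ) := by
      exact_mod_cast (by omega : 3 ≤ ((i1 : ℕ) - (i0 : ℕ) - 1 : ℕ) + 1)
    nlinarith
  -- choose the serving index m
  have hmain : ∃ m : Fin R.length, dist (p (R.get m)) (p v) ≤ 2 ∧
      (((i1 : ℕ) = (i0 : ℕ) + 2 ∧ (m : ℕ) = (i0 : ℕ) + 1) ∨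
       ((i1 : ℕ) ≤ (i0 : ℕ) + 1 ∧ (m : ℕ) = (i0 : ℕ))) := by
    by_cases hc : (i1 : ℕ) = (i0 : ℕ) + 2
    · have hmlt : (i0 : ℕ) + 1 < R.length := by have := i1.isLt; omega
      refine ⟨⟨(i0 : ℕ) + 1, hmlt⟩, ?_, Or.inl ⟨hc, rfl⟩⟩
      have hg1 := CFAux.reps_gap 0 i0 ⟨(i0 : ℕ) + 1, hmlt⟩ (by simp)
      have hg2 := CFAux.reps_gap 0 ⟨(i0 : ℕ) + 1, hmlt⟩ i1 (by simp; omega)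
      have hys : CFAux.strip p (R.get ⟨(i0 : ℕ) + 1, hmlt⟩) = CFAux.strip p v := by
        rw [CFAux.reps_strip (R.get_mem _), hk]
      have hy := CFAux.same_strip_dy p hys
      rw [abs_lt] at hy
      apply CFAux.dist_le_two_of_sq
      push_cast at hg1 hg2
      nlinarith [hy.1, hy.2]
    · exact ⟨i0, hd0, Or.inr ⟨by omega, rfl⟩⟩
  obtain ⟨m, hmd, hmspec⟩ := hmain
  have hmmem : R.get m ∈ CFAux.reps p k := R.get_mem m
  obtain ⟨cu, hcu, hcuval⟩ := CFAux.chi_val hmmem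
  refine ⟨R.get m, (hnbhd _).mpr hmd, by rw [hcu]; rfl, ?_⟩
  intro w hw hchiw
  rw [hcu] at hchiw
  obtain ⟨hwreps, hwval⟩ := CFAux.chi_spec hchiw
  have hwd : dist (p w) (p v) ≤ 2 := (hnbhd w).mp hw
  -- w is in the same strip as v
  have hclose := CFAux.strip_close p hwd
  have hmod : CFAux.strip p w % 3 = k % 3 := by
    have e1 : 0 ≤ CFAux.strip p w % 3 := Int.emod_nonneg _ (by norm_num)
    have e2 : 0 ≤ k % 3 := Int.emod_nonneg _ (by norm_num)
    have h2w : (CFAux.reps p (CFAux.strip p w)).idxOf w % 2 < 2 :=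
      Nat.mod_lt _ (by norm_num)
    have h2u : R.idxOf (R.get m) % 2 < 2 := Nat.mod_lt _ (by norm_num)
    omega
  have hsw : CFAux.strip p w = k := by
    rcases hclose with ⟨c1, c2⟩
    rw [← hk] at c1 c2
    omega
  rw [hsw] at hwreps hwval
  -- indices
  obtain ⟨jf, hjf⟩ := List.mem_iff_get.mp hwreps
  have hjidx : R.idxOf w = (jf : ℕ) := by rw [← hjf]; exact CFAux.indexOf_get jf
  have hmidx : R.idxOf (R.get m) = (m : ℕ) := CFAux.indexOf_get m
  have hpar : (jf : ℕ) % 2 = (m : ℕ) % 2 := by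
    rw [hjidx] at hwval
    rw [hmidx] at hcuval
    omega
  have hjA : jf ∈ A := (hmemA jf).mpr (by rw [hjf]; exact hwd)
  have hj0 : (i0 : ℕ) ≤ (jf : ℕ) := A.min'_le jf hjA
  have hj1 : (jf : ℕ) ≤ (i1 : ℕ) := A.le_max' jf hjA
  have hjm : (jf : ℕ) = (m : ℕ) := by omega
  rw [← hjf]
  congr 1
  exact Fin.ext hjm
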